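/- arXiv:1703.00135 — 4 statements merged into one kernel-verified Lean document; each statement's English description precedes it below -/
import Mathlib

section
/- Let 1 ≤ s ≤ N, 1 ≤ k ≤ m, λ > 0, and suppose A ∈ ℂ^{m×N} satisfies the ℓ²-robust null space property of order (s,k) with weight λ and constants ρ ∈ (0,1), τ > 0. Let x ∈ ℂ^N, c ∈ ℂ^m, y ∈ ℂ^m and ε > 0 satisfy ‖Ax + c − y‖₂ ≤ ε, and let (x̂, ĉ) be a minimizer of ‖z‖₁ + λ‖d‖₁ over pairs (z,d) ∈ ℂ^N × ℂ^m subject to ‖Az + d − y‖₂ ≤ ε. Then ‖x − x̂‖₁ + λ‖c − ĉ‖₁ ≤ (2(1+ρ)/(1−ρ))·(σ_s(x)₁ + λ·σ_k(c)₁) + (4τ/(1−ρ))·√(s + λ²k)·ε. -/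
open Finset Matrix MeasureTheory

noncomputable def l1norm {n : ℕ} (x : Fin n → ℂ) : ℝ := ∑ i, ‖x i‖

noncomputable def l2norm {n : ℕ} (x : Fin n → ℂ) : ℝ := Real.sqrt (∑ i, ‖x i‖ ^ 2)

/-- The vector equal to `x` on `S` and zero elsewhere. -/
def restr {n : ℕ} (x : Fin n → ℂ) (S : Finset (Fin n)) : Fin n → ℂ :=
  fun i => if i ∈ S then x i else 0

/-- `x` has at most `s` nonzero entries. -/
def IsSparse {n : ℕ} (s : ℕ) (x : Fin n → ℂ) : Prop :=
  ∃ S : Finset (Fin n), S.card ≤ s ∧ ∀ i ∉ S, x i = 0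

/-- Best `s`-term approximation error of `x` in the `ℓ¹` norm. -/
noncomputable def sigma1 {n : ℕ} (s : ℕ) (x : Fin n → ℂ) : ℝ :=
  sInf {t : ℝ | ∃ z : Fin n → ℂ, IsSparse s z ∧ t = l1norm (x - z)}

/-- `η_{s,k}(λ) = (s + λ²k)/min{s, λ²k}`. -/
noncomputable def etaSK (s k : ℕ) (lam : ℝ) : ℝ :=
  ((s : ℝ) + lam ^ 2 * k) / min (s : ℝ) (lam ^ 2 * k)

/-- The ℓ¹-robust null space property of order (s,k) with weight lam, constants ρ, τ. -/
def L1RNSP {m N : ℕ} (A : Matrix (Fin m) (Fin N) ℂ) (s k : ℕ) (lam ρ τ : ℝ) : Prop :=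
  ∀ (x : Fin N → ℂ) (c : Fin m → ℂ) (S : Finset (Fin N)) (T : Finset (Fin m)),
    S.card ≤ s → T.card ≤ k →
      l1norm (restr x S) + lam * l1norm (restr c T) ≤
        ρ * (l1norm (restr x Sᶜ) + lam * l1norm (restr c Tᶜ)) + τ * l2norm (A.mulVec x + c)

/-- The ℓ²-robust null space property of order (s,k) with weight lam, constants ρ, τ. -/
def L2RNSP {m N : ℕ} (A : Matrix (Fin m) (Fin N) ℂ) (s k : ℕ) (lam ρ τ : ℝ) : Prop :=
  ∀ (x : Fin N → ℂ) (c : Fin m → ℂ) (S : Finset (Fin N)) (T : Finset (Fin m)),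
    S.card ≤ s → T.card ≤ k →
      Real.sqrt (l2norm (restr x S) ^ 2 + l2norm (restr c T) ^ 2) ≤
        (ρ / Real.sqrt ((s : ℝ) + lam ^ 2 * k)) *
            (l1norm (restr x Sᶜ) + lam * l1norm (restr c Tᶜ)) +
          τ * l2norm (A.mulVec x + c)

/-- `A` satisfies the two-sided RIP inequality for the sparse corruptions problem of
order `(s,k)` with constant `δ`. -/
def RIPCor {m N : ℕ} (A : Matrix (Fin m) (Fin N) ℂ) (s k : ℕ) (δ : ℝ) : Prop :=
  ∀ (x : Fin N → ℂ) (c : Fin m → ℂ), IsSparse s x → IsSparse k c →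
    (1 - δ) * (l2norm x ^ 2 + l2norm c ^ 2) ≤ l2norm (A.mulVec x + c) ^ 2 ∧
      l2norm (A.mulVec x + c) ^ 2 ≤ (1 + δ) * (l2norm x ^ 2 + l2norm c ^ 2)

/-- `A` satisfies the RIP inequality for sparse vectors of order `s` with constant `δ`. -/
def RIPSparse {m N : ℕ} (A : Matrix (Fin m) (Fin N) ℂ) (s : ℕ) (δ : ℝ) : Prop :=
  ∀ x : Fin N → ℂ, IsSparse s x →
    (1 - δ) * l2norm x ^ 2 ≤ l2norm (A.mulVec x) ^ 2 ∧
      l2norm (A.mulVec x) ^ 2 ≤ (1 + δ) * l2norm x ^ 2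

/-- `(xh, ch)` is a minimizer of `‖z‖₁ + lam ‖d‖₁` subject to `‖Az + d - y‖₂ ≤ ε`. -/
def IsMinimizer {m N : ℕ} (A : Matrix (Fin m) (Fin N) ℂ) (y : Fin m → ℂ) (lam ε : ℝ)
    (xh : Fin N → ℂ) (ch : Fin m → ℂ) : Prop :=
  l2norm (A.mulVec xh + ch - y) ≤ ε ∧
    ∀ (z : Fin N → ℂ) (d : Fin m → ℂ), l2norm (A.mulVec z + d - y) ≤ ε →
      l1norm xh + lam * l1norm ch ≤ l1norm z + lam * l1norm d

/-- Spectral norm of a matrix (operator norm w.r.t. Euclidean norms). -/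
noncomputable def specNorm {a b : ℕ} (B : Matrix (Fin a) (Fin b) ℂ) : ℝ :=
  ‖LinearMap.toContinuousLinearMap (Matrix.toEuclideanLin B)‖

/-- `σ_{s,k}(A)`: the maximum spectral norm over `k × s` submatrices of `A`. -/
noncomputable def sigmaSK {m N : ℕ} (A : Matrix (Fin m) (Fin N) ℂ) (s k : ℕ) : ℝ :=
  sSup {t : ℝ | ∃ (S : Finset (Fin N)) (T : Finset (Fin m)) (hS : S.card = s) (hT : T.card = k),
    t = specNorm (A.submatrix (fun i : Fin k => ((T.orderIsoOfFin hT i : Fin m)))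
      (fun j : Fin s => ((S.orderIsoOfFin hS j : Fin N))))}

section Aux

lemma l1norm_nonneg {n : ℕ} (x : Fin n → ℂ) : 0 ≤ l1norm x :=
  Finset.sum_nonneg fun _ _ => norm_nonneg _

lemma l1norm_split {n : ℕ} (x : Fin n → ℂ) (S : Finset (Fin n)) :
    l1norm x = l1norm (restr x S) + l1norm (restr x Sᶜ) := by
  unfold l1norm restr
  rw [← Finset.sum_add_distrib]
  refine Finset.sum_congr rfl fun i _ => ?_
  by_cases hi : i ∈ S <;> simp [hi, Finset.mem_compl]

lemma l1norm_restr_add_le {n : ℕ} (a b : Fin n → ℂ) (S : Finset (Fin n)) :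
    l1norm (restr (a + b) S) ≤ l1norm (restr a S) + l1norm (restr b S) := by
  unfold l1norm restr
  rw [← Finset.sum_add_distrib]
  refine Finset.sum_le_sum fun i _ => ?_
  by_cases hi : i ∈ S
  · simp only [Pi.add_apply, if_pos hi]
    exact norm_add_le _ _
  · simp [hi]

lemma l1norm_restr_neg {n : ℕ} (a : Fin n → ℂ) (S : Finset (Fin n)) :
    l1norm (restr (-a) S) = l1norm (restr a S) := by
  unfold l1norm restr
  refine Finset.sum_congr rfl fun i _ => ?_
  by_cases hi : i ∈ S <;> simp [hi]

lemma key_ineq {n : ℕ} (x z : Fin n → ℂ) (S : Finset (Fin n)) :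
    l1norm (restr (x - z) Sᶜ) ≤
      l1norm z - l1norm x + l1norm (restr (x - z) S) + 2 * l1norm (restr x Sᶜ) := by
  have hx := l1norm_split x S
  have hz := l1norm_split z S
  have hc : l1norm (restr x S) ≤ l1norm (restr (x - z) S) + l1norm (restr z S) := by
    have h := l1norm_restr_add_le (x - z) z S
    rwa [sub_add_cancel] at h
  have hd : l1norm (restr (x - z) Sᶜ) ≤ l1norm (restr x Sᶜ) + l1norm (restr z Sᶜ) := by
    have h := l1norm_restr_add_le x (-z) Sᶜ
    rw [l1norm_restr_neg] at h
    simpa [sub_eq_add_neg] using h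
  linarith

lemma sigma1_approx {n : ℕ} (s : ℕ) (x : Fin n → ℂ) {δ : ℝ} (hδ : 0 < δ) :
    ∃ S : Finset (Fin n), S.card ≤ s ∧ l1norm (restr x Sᶜ) ≤ sigma1 s x + δ := by
  have hne : {t : ℝ | ∃ z : Fin n → ℂ, IsSparse s z ∧ t = l1norm (x - z)}.Nonempty :=
    ⟨l1norm (x - 0), 0, ⟨∅, by simp, fun i _ => rfl⟩, rfl⟩
  obtain ⟨t, ⟨z, ⟨S, hcard, hz⟩, rfl⟩, hlt⟩ := Real.lt_sInf_add_pos hne hδ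
  refine ⟨S, hcard, ?_⟩
  have hle : l1norm (restr x Sᶜ) ≤ l1norm (x - z) := by
    unfold l1norm restr
    refine Finset.sum_le_sum fun i _ => ?_
    by_cases hi : i ∈ Sᶜ
    · simp [hi, Pi.sub_apply, hz i (Finset.mem_compl.mp hi)]
    · simp [hi]
  exact hle.trans (le_of_lt (by rwa [sigma1]))

lemma l2norm_eq_norm {n : ℕ} (x : Fin n → ℂ) :
    l2norm x = ‖(WithLp.equiv 2 (Fin n → ℂ)).symm x‖ := by
  rw [EuclideanSpace.norm_eq]; rfl

lemma l2norm_sub_le {n : ℕ} (a b : Fin n → ℂ) : l2norm (a - b) ≤ l2norm a + l2norm b := by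
  rw [l2norm_eq_norm, l2norm_eq_norm, l2norm_eq_norm]
  exact norm_sub_le ((WithLp.equiv 2 (Fin n → ℂ)).symm a) ((WithLp.equiv 2 (Fin n → ℂ)).symm b)

lemma l1norm_restr_le_sqrt_card {n : ℕ} (x : Fin n → ℂ) (S : Finset (Fin n)) :
    l1norm (restr x S) ≤ Real.sqrt S.card * l2norm (restr x S) := by
  have h1 : l1norm (restr x S) = ∑ i ∈ S, ‖x i‖ := by
    unfold l1norm restr
    simp only [apply_ite norm, norm_zero, Finset.sum_ite_mem, Finset.univ_inter]
  have h2 : l2norm (restr x S) = Real.sqrt (∑ i ∈ S, ‖x i‖ ^ 2) := by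
    unfold l2norm restr
    congr 1
    calc ∑ i : Fin n, ‖if i ∈ S then x i else 0‖ ^ 2
        = ∑ i : Fin n, (if i ∈ S then ‖x i‖ ^ 2 else 0) := by
          refine Finset.sum_congr rfl fun i _ => ?_
          by_cases hi : i ∈ S <;> simp [hi]
      _ = ∑ i ∈ S, ‖x i‖ ^ 2 := by rw [Finset.sum_ite_mem, Finset.univ_inter]
  rw [h1, h2, ← Real.sqrt_mul (Nat.cast_nonneg S.card)]
  have hcs : (∑ i ∈ S, ‖x i‖) ^ 2 ≤ (S.card : ℝ) * ∑ i ∈ S, ‖x i‖ ^ 2 := by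
    have h := sq_sum_le_card_mul_sum_sq (α := ℝ) (s := S) (f := fun i => ‖x i‖)
    exact_mod_cast h
  calc (∑ i ∈ S, ‖x i‖) = Real.sqrt ((∑ i ∈ S, ‖x i‖) ^ 2) :=
        (Real.sqrt_sq (Finset.sum_nonneg fun i _ => norm_nonneg (x i))).symm
    _ ≤ Real.sqrt ((S.card : ℝ) * ∑ i ∈ S, ‖x i‖ ^ 2) := Real.sqrt_le_sqrt hcs

lemma two_cs (p q a b : ℝ) (hp : 0 ≤ p) (hq : 0 ≤ q) (ha : 0 ≤ a) (hb : 0 ≤ b) :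
    Real.sqrt p * a + Real.sqrt q * b ≤ Real.sqrt (p + q) * Real.sqrt (a ^ 2 + b ^ 2) := by
  have h1 : (Real.sqrt p * a + Real.sqrt q * b) ^ 2 ≤ (p + q) * (a ^ 2 + b ^ 2) := by
    nlinarith [Real.sq_sqrt hp, Real.sq_sqrt hq, sq_nonneg (Real.sqrt p * b - Real.sqrt q * a),
      Real.sqrt_nonneg p, Real.sqrt_nonneg q]
  calc Real.sqrt p * a + Real.sqrt q * b
      = Real.sqrt ((Real.sqrt p * a + Real.sqrt q * b) ^ 2) :=
        (Real.sqrt_sq (add_nonneg (mul_nonneg (Real.sqrt_nonneg p) ha)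
          (mul_nonneg (Real.sqrt_nonneg q) hb))).symm
    _ ≤ Real.sqrt ((p + q) * (a ^ 2 + b ^ 2)) := Real.sqrt_le_sqrt h1
    _ = Real.sqrt (p + q) * Real.sqrt (a ^ 2 + b ^ 2) := Real.sqrt_mul (by linarith) _

end Aux

/-- ℓ¹ recovery estimate under the ℓ²-robust NSP, with explicit constants. -/
theorem l1_recovery_of_l2RNSP {N m : ℕ} (s k : ℕ)
    (hs1 : 1 ≤ s) (hsN : s ≤ N) (hk1 : 1 ≤ k) (hkm : k ≤ m)
    (lam : ℝ) (hlam : 0 < lam)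
    (A : Matrix (Fin m) (Fin N) ℂ) (ρ τ : ℝ) (hρ0 : 0 < ρ) (hρ1 : ρ < 1) (hτ : 0 < τ)
    (h : L2RNSP A s k lam ρ τ)
    (x : Fin N → ℂ) (c y : Fin m → ℂ) (ε : ℝ) (hε : 0 < ε)
    (hfeas : l2norm (A.mulVec x + c - y) ≤ ε)
    (xh : Fin N → ℂ) (ch : Fin m → ℂ) (hmin : IsMinimizer A y lam ε xh ch) :
    l1norm (x - xh) + lam * l1norm (c - ch) ≤
      (2 * (1 + ρ) / (1 - ρ)) * (sigma1 s x + lam * sigma1 k c) +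
        (4 * τ / (1 - ρ)) * Real.sqrt ((s : ℝ) + lam ^ 2 * k) * ε := by
  have hρpos : (0:ℝ) < 1 - ρ := by linarith
  have h1ρ : (0:ℝ) < 1 + ρ := by linarith
  have h1lam : (0:ℝ) < 1 + lam := by linarith
  have hspos : (0:ℝ) < (s : ℝ) + lam ^ 2 * k := by
    have h1 : (1:ℝ) ≤ (s:ℝ) := by exact_mod_cast hs1
    nlinarith [sq_nonneg lam, Nat.cast_nonneg (α := ℝ) k]
  set r := Real.sqrt ((s : ℝ) + lam ^ 2 * k) with hrdef
  have hrpos : 0 < r := Real.sqrt_pos.mpr hspos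
  have hr0 : r ≠ 0 := ne_of_gt hrpos
  apply le_of_forall_pos_le_add
  intro η hη
  set δ := η * (1 - ρ) / (2 * (1 + ρ) * (1 + lam)) with hδdef
  have hδ : 0 < δ := div_pos (mul_pos hη hρpos) (mul_pos (mul_pos two_pos h1ρ) h1lam)
  obtain ⟨S, hScard, hSx⟩ := sigma1_approx s x hδ
  obtain ⟨T, hTcard, hTc⟩ := sigma1_approx k c hδ
  -- energy bound
  have hveq : A.mulVec (x - xh) + (c - ch)
      = (A.mulVec x + c - y) - (A.mulVec xh + ch - y) := by
    rw [Matrix.mulVec_sub]; abel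
  have hE : l2norm (A.mulVec (x - xh) + (c - ch)) ≤ 2 * ε := by
    rw [hveq]
    calc l2norm ((A.mulVec x + c - y) - (A.mulVec xh + ch - y))
        ≤ l2norm (A.mulVec x + c - y) + l2norm (A.mulVec xh + ch - y) := l2norm_sub_le _ _
      _ ≤ 2 * ε := by linarith [hmin.1]
  -- NSP consequences
  have hnsp := h (x - xh) (c - ch) S T hScard hTcard
  set a := l2norm (restr (x - xh) S) with hadef
  set b := l2norm (restr (c - ch) T) with hbdef
  have ha0 : 0 ≤ a := Real.sqrt_nonneg _
  have hb0 : 0 ≤ b := Real.sqrt_nonneg _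
  have hQ1 : l1norm (restr (x - xh) S) ≤ Real.sqrt s * a := by
    refine (l1norm_restr_le_sqrt_card _ S).trans ?_
    exact mul_le_mul_of_nonneg_right (Real.sqrt_le_sqrt (by exact_mod_cast hScard)) ha0
  have hQ2 : lam * l1norm (restr (c - ch) T) ≤ Real.sqrt (lam ^ 2 * k) * b := by
    have h2 : lam * Real.sqrt T.card ≤ Real.sqrt (lam ^ 2 * k) := by
      have heq : lam * Real.sqrt T.card = Real.sqrt (lam ^ 2 * T.card) := by
        rw [Real.sqrt_mul (sq_nonneg lam), Real.sqrt_sq hlam.le]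
      rw [heq]
      apply Real.sqrt_le_sqrt
      have hTk : (T.card : ℝ) ≤ k := by exact_mod_cast hTcard
      nlinarith [sq_nonneg lam]
    calc lam * l1norm (restr (c - ch) T) ≤ lam * (Real.sqrt T.card * b) :=
          mul_le_mul_of_nonneg_left (l1norm_restr_le_sqrt_card _ T) hlam.le
      _ = (lam * Real.sqrt T.card) * b := by ring
      _ ≤ Real.sqrt (lam ^ 2 * k) * b := mul_le_mul_of_nonneg_right h2 hb0
  have hQ4 : l1norm (restr (x - xh) S) + lam * l1norm (restr (c - ch) T) ≤
      r * Real.sqrt (a ^ 2 + b ^ 2) := by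
    calc l1norm (restr (x - xh) S) + lam * l1norm (restr (c - ch) T)
        ≤ Real.sqrt s * a + Real.sqrt (lam ^ 2 * k) * b := add_le_add hQ1 hQ2
      _ ≤ Real.sqrt ((s:ℝ) + lam ^ 2 * k) * Real.sqrt (a ^ 2 + b ^ 2) :=
          two_cs _ _ a b (Nat.cast_nonneg s) (by positivity) ha0 hb0
      _ = r * Real.sqrt (a ^ 2 + b ^ 2) := by rw [hrdef]
  have hQρ : l1norm (restr (x - xh) S) + lam * l1norm (restr (c - ch) T) ≤
      ρ * (l1norm (restr (x - xh) Sᶜ) + lam * l1norm (restr (c - ch) Tᶜ))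
        + 2 * (τ * r) * ε := by
    have hmul := mul_le_mul_of_nonneg_left hnsp hrpos.le
    have hrw : r * ((ρ / r) * (l1norm (restr (x - xh) Sᶜ) + lam * l1norm (restr (c - ch) Tᶜ))
        + τ * l2norm (A.mulVec (x - xh) + (c - ch)))
        = ρ * (l1norm (restr (x - xh) Sᶜ) + lam * l1norm (restr (c - ch) Tᶜ))
          + r * τ * l2norm (A.mulVec (x - xh) + (c - ch)) := by
      field_simp
    rw [hrw] at hmul
    have hE' : r * τ * l2norm (A.mulVec (x - xh) + (c - ch)) ≤ 2 * (τ * r) * ε := by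
      have h3 := mul_le_mul_of_nonneg_left hE (mul_nonneg hrpos.le hτ.le)
      linarith [h3]
    linarith [hQ4, hmul, hE']
  -- key deficit inequalities
  have hKx := key_ineq x xh S
  have hKc := key_ineq c ch T
  have hmin' : l1norm xh + lam * l1norm ch ≤ l1norm x + lam * l1norm c := hmin.2 x c hfeas
  have hKc' := mul_le_mul_of_nonneg_left hKc hlam.le
  have hTc' := mul_le_mul_of_nonneg_left hTc hlam.le
  have hPQ : l1norm (restr (x - xh) Sᶜ) + lam * l1norm (restr (c - ch) Tᶜ) ≤
      l1norm (restr (x - xh) S) + lam * l1norm (restr (c - ch) T)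
        + 2 * sigma1 s x + 2 * (lam * sigma1 k c) + 2 * (1 + lam) * δ := by
    linarith [hKx, hKc', hmin', hSx, hTc']
  have hPfinal : l1norm (restr (x - xh) Sᶜ) + lam * l1norm (restr (c - ch) Tᶜ) ≤
      (2 * (τ * r) * ε + 2 * sigma1 s x + 2 * (lam * sigma1 k c) + 2 * (1 + lam) * δ)
        / (1 - ρ) := by
    rw [le_div_iff₀ hρpos]
    linarith [hPQ, hQρ]
  have hsplitx := l1norm_split (x - xh) S
  have hsplitc := l1norm_split (c - ch) T
  have hsplitc2 : lam * l1norm (c - ch) =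
      lam * l1norm (restr (c - ch) T) + lam * l1norm (restr (c - ch) Tᶜ) := by
    rw [hsplitc, mul_add]
  have hfinal1 : l1norm (x - xh) + lam * l1norm (c - ch) ≤
      (1 + ρ) * (l1norm (restr (x - xh) Sᶜ) + lam * l1norm (restr (c - ch) Tᶜ))
        + 2 * (τ * r) * ε := by
    linarith [hQρ, hsplitx, hsplitc2]
  have hfinal2 := mul_le_mul_of_nonneg_left hPfinal h1ρ.le
  have hne1 : (1:ℝ) - ρ ≠ 0 := ne_of_gt hρpos
  have hne2 : (1:ℝ) + ρ ≠ 0 := ne_of_gt h1ρ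
  have hne3 : (1:ℝ) + lam ≠ 0 := ne_of_gt h1lam
  have halg : (1 + ρ) * ((2 * (τ * r) * ε + 2 * sigma1 s x + 2 * (lam * sigma1 k c)
        + 2 * (1 + lam) * δ) / (1 - ρ)) + 2 * (τ * r) * ε
      = (2 * (1 + ρ) / (1 - ρ)) * (sigma1 s x + lam * sigma1 k c)
        + (4 * τ / (1 - ρ)) * r * ε + η := by
    rw [hδdef]
    field_simp
    ring
  linarith [hfinal1, hfinal2, halg]
end

section
/- Let 1 ≤ s ≤ N, 1 ≤ k ≤ m ≤ N, and let A ∈ ℂ^{m×N} satisfy the Restricted Isometry Property for the sparse corruptions problem of order (2s, 2k) with constant δ_{2s,2k} < 1. Suppose x ∈ ℂ^N is s-sparse and c ∈ ℂ^m is k-sparse, and that ‖Ax + c‖₂² − (‖x‖₂² + ‖c‖₂²) = t·(‖x‖₂² + ‖c‖₂²) for some t with |t| ≤ δ_{2s,2k}. If z ∈ ℂ^N is s-sparse and orthogonal to x, and d ∈ ℂ^m is k-sparse and orthogonal to c, then |⟨Ax + c, Az + d⟩| ≤ √(δ_{2s,2k}² − t²)·√(‖x‖₂² + ‖c‖₂²)·√(‖z‖₂²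 + ‖d‖₂²). -/
open Finset Matrix MeasureTheory

lemma l2norm_sq {n : ℕ} (w : Fin n → ℂ) : l2norm w ^ 2 = ∑ i, Complex.normSq (w i) := by
  unfold l2norm
  rw [Real.sq_sqrt (by positivity)]
  simp [Complex.normSq_eq_norm_sq]

lemma expand_sum {n : ℕ} (a : ℂ) (w₁ w₂ : Fin n → ℂ) :
    ∑ i, Complex.normSq (a * w₁ i + w₂ i) =
      Complex.normSq a * ∑ i, Complex.normSq (w₁ i) + ∑ i, Complex.normSq (w₂ i)
        + 2 * (a * ∑ i, w₁ i * (starRingEnd ℂ) (w₂ i)).re := by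
  simp only [Complex.normSq_add, Complex.normSq_mul, Finset.sum_add_distrib,
    Finset.mul_sum, Complex.re_sum, mul_assoc]

lemma isSparse_comb {n s1 s2 : ℕ} {x z : Fin n → ℂ} (a : ℂ)
    (hx : IsSparse s1 x) (hz : IsSparse s2 z) : IsSparse (s1 + s2) (fun i => a * x i + z i) := by
  obtain ⟨S, hS, hSx⟩ := hx; obtain ⟨T, hT, hTz⟩ := hz
  exact ⟨S ∪ T, le_trans (Finset.card_union_le _ _) (Nat.add_le_add hS hT),
    fun i hi => by simp [hSx i (fun h => hi (Finset.mem_union_left _ h)),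
                         hTz i (fun h => hi (Finset.mem_union_right _ h))]⟩

lemma mulVec_comb {m N : ℕ} (A : Matrix (Fin m) (Fin N) ℂ) (a : ℂ) (x z : Fin N → ℂ)
    (c d : Fin m → ℂ) :
    (A.mulVec (fun j => a * x j + z j) + fun i => a * c i + d i) =
      fun i => a * (A.mulVec x + c) i + (A.mulVec z + d) i := by
  funext i
  simp [Matrix.mulVec, dotProduct, mul_add, Finset.sum_add_distrib, Finset.mul_sum]
  have h : ∑ j, A i j * (a * x j) = ∑ j, a * (A i j * x j) := Finset.sum_congr rfl fun j _ => by ring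
  rw [h]; ring


set_option maxHeartbeats 1000000 in
/-- inner product bound for RIP matrices on orthogonal sparse pairs. -/
theorem rip_disjoint_inner_product {N m : ℕ} (s k : ℕ)
    (hs1 : 1 ≤ s) (hsN : s ≤ N) (hk1 : 1 ≤ k) (hkm : k ≤ m) (hmN : m ≤ N)
    (A : Matrix (Fin m) (Fin N) ℂ) (δ : ℝ) (hδ0 : 0 ≤ δ) (hδ1 : δ < 1)
    (hRIP : RIPCor A (2 * s) (2 * k) δ)
    (x z : Fin N → ℂ) (c d : Fin m → ℂ)
    (hx : IsSparse s x) (hc : IsSparse k c) (hz : IsSparse s z) (hd : IsSparse k d)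
    (t : ℝ) (ht : |t| ≤ δ)
    (hteq : l2norm (A.mulVec x + c) ^ 2 - (l2norm x ^ 2 + l2norm c ^ 2) =
      t * (l2norm x ^ 2 + l2norm c ^ 2))
    (hxz : ∑ j, (starRingEnd ℂ) (x j) * z j = 0)
    (hcd : ∑ i, (starRingEnd ℂ) (c i) * d i = 0) :
    ‖∑ i, (starRingEnd ℂ) ((A.mulVec x + c) i) * ((A.mulVec z + d) i)‖ ≤
      Real.sqrt (δ ^ 2 - t ^ 2) * Real.sqrt (l2norm x ^ 2 + l2norm c ^ 2) *
        Real.sqrt (l2norm z ^ 2 + l2norm d ^ 2) := by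
  set u : Fin m → ℂ := A.mulVec x + c with hu
  set v : Fin m → ℂ := A.mulVec z + d with hv
  set I : ℂ := ∑ i, (starRingEnd ℂ) (u i) * v i with hI
  set p : ℝ := ‖I‖ with hp
  set E : ℝ := l2norm x ^ 2 + l2norm c ^ 2 with hE
  set F : ℝ := l2norm z ^ 2 + l2norm d ^ 2 with hF
  set U : ℝ := l2norm u ^ 2 with hU
  set V : ℝ := l2norm v ^ 2 with hV
  have hp0 : 0 ≤ p := norm_nonneg _
  have hE0 : 0 ≤ E := by rw [hE]; positivity
  have hF0 : 0 ≤ F := by rw [hF]; positivity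
  have hD0 : 0 ≤ δ ^ 2 - t ^ 2 := by
    have h1 : t ^ 2 = |t| ^ 2 := (sq_abs t).symm
    nlinarith [abs_nonneg t]
  have hUE : U = (1 + t) * E := by rw [hU]; linarith [hteq]
  -- conjugate facts
  have hxz' : ∑ j, x j * (starRingEnd ℂ) (z j) = 0 := by
    have h := congrArg (starRingEnd ℂ) hxz
    simpa [map_sum] using h
  have hcd' : ∑ i, c i * (starRingEnd ℂ) (d i) = 0 := by
    have h := congrArg (starRingEnd ℂ) hcd
    simpa [map_sum] using h
  have huv' : ∑ i, u i * (starRingEnd ℂ) (v i) = (starRingEnd ℂ) I := by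
    rw [hI, map_sum]
    exact Finset.sum_congr rfl fun i _ => by simp [mul_comm]
  -- the main RIP consequence for arbitrary scalar a
  have main : ∀ a : ℂ,
      (1 - δ) * (Complex.normSq a * E + F) ≤
        Complex.normSq a * U + V + 2 * (a * (starRingEnd ℂ) I).re ∧
      Complex.normSq a * U + V + 2 * (a * (starRingEnd ℂ) I).re ≤
        (1 + δ) * (Complex.normSq a * E + F) := by
    intro a
    have hsp1 : IsSparse (2 * s) (fun j => a * x j + z j) := by
      have := isSparse_comb a hx hz; rwa [two_mul]
    have hsp2 : IsSparse (2 * k) (fun i => a * c i + d i) := by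
      have := isSparse_comb a hc hd; rwa [two_mul]
    obtain ⟨h1, h2⟩ := hRIP _ _ hsp1 hsp2
    have hlhs : l2norm (fun j => a * x j + z j) ^ 2 + l2norm (fun i => a * c i + d i) ^ 2
        = Complex.normSq a * E + F := by
      rw [l2norm_sq, l2norm_sq, expand_sum, expand_sum, hxz', hcd']
      rw [hE, hF, l2norm_sq, l2norm_sq, l2norm_sq, l2norm_sq]
      simp; ring
    have hrhs : l2norm (A.mulVec (fun j => a * x j + z j) + fun i => a * c i + d i) ^ 2
        = Complex.normSq a * U + V + 2 * (a * (starRingEnd ℂ) I).re := by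
      rw [mulVec_comb, ← hu, ← hv, l2norm_sq, expand_sum, huv', hU, hV, l2norm_sq, l2norm_sq]
    rw [hlhs, hrhs] at h1 h2
    exact ⟨h1, h2⟩
  -- choice of phase b
  set b : ℂ := if I = 0 then 1 else I / (‖I‖ : ℝ) with hb
  have hnb : Complex.normSq b = 1 := by
    by_cases hI0 : I = 0
    · simp [hb, hI0]
    · have : ‖I‖ ≠ 0 := norm_ne_zero_iff.mpr hI0
      have habs : ‖I‖ ≠ 0 := this
      rw [hb, if_neg hI0, Complex.normSq_div, Complex.normSq_ofReal,
        Complex.normSq_eq_norm_sq]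
      rw [sq, div_self (mul_ne_zero habs habs)]
  have hbre : (b * (starRingEnd ℂ) I).re = p := by
    by_cases hI0 : I = 0
    · simp [hb, hI0, hp]
    · have h0 : ‖I‖ ≠ 0 := norm_ne_zero_iff.mpr hI0
      rw [hb, if_neg hI0, div_mul_eq_mul_div, Complex.mul_conj]
      rw [Complex.div_ofReal_re]
      rw [Complex.ofReal_re]
      rw [Complex.normSq_eq_norm_sq, hp]
      field_simp [sq]
  -- scalar inequalities
  have upper : ∀ r : ℝ, 0 ≤ r → 2 * r * p ≤ (δ - t) * r ^ 2 * E + (1 + δ) * F - V := by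
    intro r hr
    have h := (main ((r : ℂ) * b)).2
    have hns : Complex.normSq ((r : ℂ) * b) = r ^ 2 := by
      rw [Complex.normSq_mul, hnb, Complex.normSq_ofReal]; ring
    have hre : (((r : ℂ) * b) * (starRingEnd ℂ) I).re = r * p := by
      rw [mul_assoc, Complex.re_ofReal_mul, hbre]
    rw [hns, hre, hUE] at h
    nlinarith
  have lower : ∀ r : ℝ, 0 ≤ r → 2 * r * p ≤ (δ + t) * r ^ 2 * E + V - (1 - δ) * F := by
    intro r hr
    have h := (main (-(r : ℂ) * b)).1
    have hns : Complex.normSq (-(r : ℂ) * b) = r ^ 2 := by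
      rw [Complex.normSq_mul, hnb, Complex.normSq_neg, Complex.normSq_ofReal]; ring
    have hre : ((-(r : ℂ) * b) * (starRingEnd ℂ) I).re = -(r * p) := by
      rw [neg_mul, neg_mul, Complex.neg_re, mul_assoc, Complex.re_ofReal_mul, hbre]
    rw [hns, hre, hUE] at h
    nlinarith
  -- claim: ∀ ρ > 0, 2 ρ p ≤ (δ²-t²) ρ² E + F
  have claim : ∀ ρ : ℝ, 0 < ρ → 2 * ρ * p ≤ (δ ^ 2 - t ^ 2) * ρ ^ 2 * E + F := by
    intro ρ hρ
    rcases eq_or_lt_of_le hδ0 with hδe | hδpos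
    · -- δ = 0, hence t = 0
      have htz : t = 0 := by
        have := abs_nonneg t; have h2 := abs_le.mp ht; nlinarith [abs_le.mp ht]
      have h1 := upper ρ hρ.le
      have h2 := lower ρ hρ.le
      rw [← hδe, htz] at h1 h2
      nlinarith [mul_nonneg (sq_nonneg ρ) hE0]
    · have hta : -δ ≤ t ∧ t ≤ δ := abs_le.mp ht
      have h1 := upper ((δ + t) * ρ) (by nlinarith [hta.1, hρ.le])
      have h2 := lower ((δ - t) * ρ) (by nlinarith [hta.2, hρ.le])
      nlinarith [h1, h2, hρ, hδpos, mul_pos hδpos hρ]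
  -- derive p² ≤ (δ²-t²) E F
  have hp2 : p ^ 2 ≤ (δ ^ 2 - t ^ 2) * E * F := by
    rcases eq_or_lt_of_le hp0 with hpz | hppos
    · rw [← hpz]
      have := mul_nonneg (mul_nonneg hD0 hE0) hF0
      nlinarith
    · rcases eq_or_lt_of_le (mul_nonneg hD0 hE0) with hDEz | hDEpos
      · exfalso
        have h := claim ((F + 1) / (2 * p)) (by positivity)
        have hx2 : (δ ^ 2 - t ^ 2) * ((F + 1) / (2 * p)) ^ 2 * E
            = ((δ ^ 2 - t ^ 2) * E) * ((F + 1) / (2 * p)) ^ 2 := by ring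
        rw [hx2, ← hDEz] at h
        have : 2 * ((F + 1) / (2 * p)) * p = F + 1 := by field_simp
        nlinarith
      · have h := claim (p / ((δ ^ 2 - t ^ 2) * E)) (by positivity)
        have hne : (δ ^ 2 - t ^ 2) * E ≠ 0 := ne_of_gt hDEpos
        have h2 : (δ ^ 2 - t ^ 2) * (p / ((δ ^ 2 - t ^ 2) * E)) ^ 2 * E
            = p ^ 2 / ((δ ^ 2 - t ^ 2) * E) := by
          rw [div_pow]; field_simp
        have h3 : 2 * (p / ((δ ^ 2 - t ^ 2) * E)) * p = 2 * p ^ 2 / ((δ ^ 2 - t ^ 2) * E) := by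
          ring
        rw [h2, h3] at h
        have h4 : p ^ 2 / ((δ ^ 2 - t ^ 2) * E) ≤ F := by
          have hr : 2 * p ^ 2 / ((δ ^ 2 - t ^ 2) * E)
              = 2 * (p ^ 2 / ((δ ^ 2 - t ^ 2) * E)) := by ring
          rw [hr] at h
          linarith
        have h5 := (div_le_iff₀ hDEpos).mp h4
        nlinarith [h5]
  -- finish
  calc p = Real.sqrt (p ^ 2) := (Real.sqrt_sq hp0).symm
    _ ≤ Real.sqrt ((δ ^ 2 - t ^ 2) * E * F) := Real.sqrt_le_sqrt hp2
    _ = Real.sqrt (δ ^ 2 - t ^ 2) * Real.sqrt E * Real.sqrt F := by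
        rw [Real.sqrt_mul (by positivity), Real.sqrt_mul hD0]
end

section
/- Let 1 ≤ s ≤ N, 1 ≤ k ≤ m, and A ∈ ℂ^{m×N}. Define σ_{s,k} = max over S ⊆ {1,…,N} with |S| = s and T ⊆ {1,…,m} with |T| = k of the spectral norm ‖A_{S,T}‖₂ of the submatrix A_{S,T} = (A_{ij})_{i∈T, j∈S}. Suppose A has the Restricted Isometry Property for sparse vectors of order s with constant δ_s < 1, and that σ_{s,k} < √(1 − δ_s). Then for all s-sparse x ∈ ℂ^N and k-sparse c ∈ ℂ^m, (1 − δ)(‖x‖₂² + ‖c‖₂²) ≤ ‖Ax + c‖₂² ≤ (1 + δ)(‖x‖₂² + ‖c‖₂²), where δ = (δ_s + √(δ_s² + 4σ_{s,k}²))/2; in particular A has the Restricted Isometry Property for the sparse corruptions problem of order (s,k) with constant δ_{s,k} ≤ δ. -/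
open Finset Matrix MeasureTheory

/-- embed a plain vector into Euclidean space -/
noncomputable def toE {n : ℕ} (x : Fin n → ℂ) : EuclideanSpace ℂ (Fin n) :=
  (WithLp.equiv 2 (Fin n → ℂ)).symm x

lemma l2norm_eq {n : ℕ} (x : Fin n → ℂ) : l2norm x = ‖toE x‖ := by
  rw [EuclideanSpace.norm_eq]; rfl

lemma sum_orderIso {s N : ℕ} {M : Type*} [AddCommMonoid M]
    (S : Finset (Fin N)) (hS : S.card = s) (f : Fin N → M) :
    ∑ j : Fin s, f (S.orderIsoOfFin hS j) = ∑ i ∈ S, f i := by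
  rw [← Finset.sum_coe_sort S f]
  exact Fintype.sum_equiv (S.orderIsoOfFin hS).toEquiv _ _ (fun j => rfl)

lemma specNorm_mulVec_le {a b : ℕ} (B : Matrix (Fin a) (Fin b) ℂ) (v : Fin b → ℂ) :
    ‖toE (B.mulVec v)‖ ≤ specNorm B * ‖toE v‖ := by
  have h : toE (B.mulVec v) =
      (LinearMap.toContinuousLinearMap (Matrix.toEuclideanLin B)) (toE v) := rfl
  rw [h]
  exact (LinearMap.toContinuousLinearMap (Matrix.toEuclideanLin B)).le_opNorm (toE v)

/-- cross term as submatrix inner product -/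
lemma inner_mulVec_eq {N m s k : ℕ} (A : Matrix (Fin m) (Fin N) ℂ)
    (x : Fin N → ℂ) (c : Fin m → ℂ)
    (S : Finset (Fin N)) (hS : S.card = s) (T : Finset (Fin m)) (hT : T.card = k)
    (hx : ∀ i ∉ S, x i = 0) (hc : ∀ i ∉ T, c i = 0) :
    (inner ℂ (toE (A.mulVec x)) (toE c) : ℂ) =
      inner ℂ (toE ((A.submatrix (fun i : Fin k => ((T.orderIsoOfFin hT i : Fin m)))
        (fun j : Fin s => ((S.orderIsoOfFin hS j : Fin N)))).mulVec
          (fun j : Fin s => x (S.orderIsoOfFin hS j))))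
        (toE (fun i : Fin k => c (T.orderIsoOfFin hT i))) := by
  rw [show (inner ℂ (toE (A.mulVec x)) (toE c) : ℂ) =
      dotProduct (star (A.mulVec x)) c from by rw [EuclideanSpace.inner_eq_star_dotProduct]; simp [toE, dotProduct, mul_comm],
    show (inner ℂ (toE ((A.submatrix (fun i : Fin k => ((T.orderIsoOfFin hT i : Fin m)))
        (fun j : Fin s => ((S.orderIsoOfFin hS j : Fin N)))).mulVec
          (fun j : Fin s => x (S.orderIsoOfFin hS j))))
        (toE (fun i : Fin k => c (T.orderIsoOfFin hT i))) : ℂ) =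
      dotProduct (star ((A.submatrix (fun i : Fin k => ((T.orderIsoOfFin hT i : Fin m)))
        (fun j : Fin s => ((S.orderIsoOfFin hS j : Fin N)))).mulVec
          (fun j : Fin s => x (S.orderIsoOfFin hS j))))
        (fun i : Fin k => c (T.orderIsoOfFin hT i)) from by rw [EuclideanSpace.inner_eq_star_dotProduct]; simp [toE, dotProduct, mul_comm]]
  simp only [dotProduct, Pi.star_apply, Matrix.mulVec, Matrix.submatrix_apply]
  have step1 : ∑ i : Fin m, star (∑ j : Fin N, A i j * x j) * c i
      = ∑ i ∈ T, star (∑ j ∈ S, A i j * x j) * c i := by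
    rw [← Finset.sum_subset T.subset_univ (fun i _ hi => by rw [hc i hi, mul_zero])]
    refine Finset.sum_congr rfl (fun i _ => ?_)
    congr 1
    congr 1
    exact (Finset.sum_subset S.subset_univ (fun j _ hj => by rw [hx j hj, mul_zero])).symm
  rw [step1, ← sum_orderIso T hT (fun i => star (∑ j ∈ S, A i j * x j) * c i)]
  refine Finset.sum_congr rfl (fun i' _ => ?_)
  congr 2
  exact (sum_orderIso S hS (fun j => A ((T.orderIsoOfFin hT) i') j * x j)).symm

lemma l2norm_restrict {s N : ℕ} (x : Fin N → ℂ) (S : Finset (Fin N)) (hS : S.card = s)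
    (hx : ∀ i ∉ S, x i = 0) :
    ‖toE (fun j : Fin s => x (S.orderIsoOfFin hS j))‖ = l2norm x := by
  rw [EuclideanSpace.norm_eq, l2norm]
  congr 1
  have : ∀ j : Fin s, ‖toE (fun j : Fin s => x (S.orderIsoOfFin hS j)) j‖ ^ 2
      = ‖x (S.orderIsoOfFin hS j)‖ ^ 2 := fun j => rfl
  simp only [this]
  rw [sum_orderIso S hS (fun i => ‖x i‖ ^ 2)]
  exact Finset.sum_subset S.subset_univ (fun i _ hi => by rw [hx i hi]; simp)

noncomputable def sigmaFun {m N : ℕ} (A : Matrix (Fin m) (Fin N) ℂ) (s k : ℕ)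
    (p : {S : Finset (Fin N) // S.card = s} × {T : Finset (Fin m) // T.card = k}) : ℝ :=
  specNorm (A.submatrix (fun i : Fin k => ((p.2.1.orderIsoOfFin p.2.2 i : Fin m)))
    (fun j : Fin s => ((p.1.1.orderIsoOfFin p.1.2 j : Fin N))))

lemma sigmaSet_eq {m N : ℕ} (A : Matrix (Fin m) (Fin N) ℂ) (s k : ℕ) :
    {t : ℝ | ∃ (S : Finset (Fin N)) (T : Finset (Fin m)) (hS : S.card = s) (hT : T.card = k),
      t = specNorm (A.submatrix (fun i : Fin k => ((T.orderIsoOfFin hT i : Fin m)))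
        (fun j : Fin s => ((S.orderIsoOfFin hS j : Fin N))))} = Set.range (sigmaFun A s k) := by
  ext t
  constructor
  · rintro ⟨S, T, hS, hT, rfl⟩
    exact ⟨⟨⟨S, hS⟩, ⟨T, hT⟩⟩, rfl⟩
  · rintro ⟨⟨⟨S, hS⟩, ⟨T, hT⟩⟩, rfl⟩
    exact ⟨S, T, hS, hT, rfl⟩

lemma specNorm_le_sigmaSK {m N : ℕ} (A : Matrix (Fin m) (Fin N) ℂ) {s k : ℕ}
    (S : Finset (Fin N)) (hS : S.card = s) (T : Finset (Fin m)) (hT : T.card = k) :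
    specNorm (A.submatrix (fun i : Fin k => ((T.orderIsoOfFin hT i : Fin m)))
      (fun j : Fin s => ((S.orderIsoOfFin hS j : Fin N)))) ≤ sigmaSK A s k := by
  apply le_csSup
  · rw [sigmaSet_eq]
    exact (Set.finite_range _).bddAbove
  · exact ⟨S, T, hS, hT, rfl⟩

lemma sigmaSK_nonneg {m N : ℕ} (A : Matrix (Fin m) (Fin N) ℂ) {s k : ℕ}
    (hsN : s ≤ N) (hkm : k ≤ m) : 0 ≤ sigmaSK A s k := by
  obtain ⟨S, -, hScard⟩ := Finset.exists_superset_card_eq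
    (s := (∅ : Finset (Fin N))) (by simp) (by simpa using hsN)
  obtain ⟨T, -, hTcard⟩ := Finset.exists_superset_card_eq
    (s := (∅ : Finset (Fin m))) (by simp) (by simpa using hkm)
  exact le_trans (norm_nonneg _) (specNorm_le_sigmaSK A S hScard T hTcard)

/-- the RIP for sparse vectors plus a bound on submatrix spectral norms
implies the RIP for the sparse corruptions problem. -/
theorem ripSparse_and_sigma_implies_ripCor {N m : ℕ} (s k : ℕ)
    (hs1 : 1 ≤ s) (hsN : s ≤ N) (hk1 : 1 ≤ k) (hkm : k ≤ m)
    (A : Matrix (Fin m) (Fin N) ℂ) (δs : ℝ) (hδ0 : 0 ≤ δs) (hδ1 : δs < 1)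
    (hRIP : RIPSparse A s δs)
    (hσ : sigmaSK A s k < Real.sqrt (1 - δs)) :
    RIPCor A s k ((δs + Real.sqrt (δs ^ 2 + 4 * sigmaSK A s k ^ 2)) / 2) := by
  intro x c hx hc
  -- supports of exact cardinality
  obtain ⟨S₀, hS₀c, hS₀⟩ := hx
  obtain ⟨S, hSsub, hScard⟩ := Finset.exists_superset_card_eq hS₀c (by simpa using hsN)
  have hxS : ∀ i ∉ S, x i = 0 := fun i hi => hS₀ i fun h => hi (hSsub h)
  obtain ⟨T₀, hT₀c, hT₀⟩ := hc
  obtain ⟨T, hTsub, hTcard⟩ := Finset.exists_superset_card_eq hT₀c (by simpa using hkm)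
  have hcT : ∀ i ∉ T, c i = 0 := fun i hi => hT₀ i fun h => hi (hTsub h)
  set σ := sigmaSK A s k with hσdef
  have hσ0 : 0 ≤ σ := sigmaSK_nonneg A hsN hkm
  have ha0 : (0:ℝ) ≤ l2norm x := Real.sqrt_nonneg _
  have hb0 : (0:ℝ) ≤ l2norm c := Real.sqrt_nonneg _
  -- cross term bound
  have hcross : ‖(inner ℂ (toE (A.mulVec x)) (toE c) : ℂ)‖ ≤ σ * (l2norm x * l2norm c) := by
    rw [inner_mulVec_eq A x c S hScard T hTcard hxS hcT]
    set B := A.submatrix (fun i : Fin k => ((T.orderIsoOfFin hTcard i : Fin m)))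
      (fun j : Fin s => ((S.orderIsoOfFin hScard j : Fin N))) with hBdef
    calc ‖(inner ℂ (toE (B.mulVec (fun j : Fin s => x (S.orderIsoOfFin hScard j))))
            (toE (fun i : Fin k => c (T.orderIsoOfFin hTcard i))) : ℂ)‖
        ≤ ‖toE (B.mulVec (fun j : Fin s => x (S.orderIsoOfFin hScard j)))‖ *
            ‖toE (fun i : Fin k => c (T.orderIsoOfFin hTcard i))‖ := norm_inner_le_norm _ _
      _ ≤ (specNorm B * ‖toE (fun j : Fin s => x (S.orderIsoOfFin hScard j))‖) *
            ‖toE (fun i : Fin k => c (T.orderIsoOfFin hTcard i))‖ :=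
          mul_le_mul_of_nonneg_right (specNorm_mulVec_le B _) (norm_nonneg _)
      _ = specNorm B * (l2norm x * l2norm c) := by
          rw [l2norm_restrict x S hScard hxS, l2norm_restrict c T hTcard hcT]; ring
      _ ≤ σ * (l2norm x * l2norm c) :=
          mul_le_mul_of_nonneg_right (specNorm_le_sigmaSK A S hScard T hTcard)
            (mul_nonneg ha0 hb0)
  have hre : |RCLike.re (inner ℂ (toE (A.mulVec x)) (toE c) : ℂ)| ≤ σ * (l2norm x * l2norm c) :=
    le_trans (RCLike.abs_re_le_norm _) hcross
  obtain ⟨hre1, hre2⟩ := abs_le.mp hre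
  -- norm expansion
  have hexp : l2norm (A.mulVec x + c) ^ 2 = l2norm (A.mulVec x) ^ 2 +
      2 * RCLike.re (inner ℂ (toE (A.mulVec x)) (toE c) : ℂ) + l2norm c ^ 2 := by
    rw [l2norm_eq, l2norm_eq, l2norm_eq]
    exact norm_add_sq (toE (A.mulVec x)) (toE c)
  obtain ⟨hL, hU⟩ := hRIP x ⟨S₀, hS₀c, hS₀⟩
  -- algebra with δ
  set t := Real.sqrt (δs ^ 2 + 4 * σ ^ 2) with htdef
  have ht2 : t ^ 2 = δs ^ 2 + 4 * σ ^ 2 := Real.sq_sqrt (by positivity)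
  have ht0 : 0 ≤ t := Real.sqrt_nonneg _
  have htδ : δs ≤ t := by nlinarith [sq_nonneg σ, sq_nonneg (t - δs)]
  set δ := (δs + t) / 2 with hδdef
  have hδsδ : δs ≤ δ := by rw [hδdef]; linarith
  have hδ0' : 0 ≤ δ := le_trans hδ0 hδsδ
  have hkey : (δ - δs) * δ = σ ^ 2 := by
    have h : (δ - δs) * δ = (t ^ 2 - δs ^ 2) / 4 := by rw [hδdef]; ring
    rw [h, ht2]; ring
  set u := Real.sqrt (δ - δs) with hudef
  set v := Real.sqrt δ with hvdef
  have hu2 : u ^ 2 = δ - δs := Real.sq_sqrt (by linarith)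
  have hv2 : v ^ 2 = δ := Real.sq_sqrt hδ0'
  have hσuv : σ = u * v := by
    have hsq : σ ^ 2 = (u * v) ^ 2 := by rw [mul_pow, hu2, hv2, ← hkey]
    have huv0 : 0 ≤ u * v := mul_nonneg (Real.sqrt_nonneg _) (Real.sqrt_nonneg _)
    calc σ = Real.sqrt (σ ^ 2) := (Real.sqrt_sq hσ0).symm
      _ = Real.sqrt ((u * v) ^ 2) := by rw [hsq]
      _ = u * v := Real.sqrt_sq huv0
  have hquad : 2 * (σ * (l2norm x * l2norm c)) ≤
      (δ - δs) * l2norm x ^ 2 + δ * l2norm c ^ 2 := by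
    rw [hσuv, ← hu2, ← hv2]
    nlinarith [sq_nonneg (u * l2norm x - v * l2norm c)]
  constructor
  · linarith
  · linarith
end

section
/- Let η ≥ 2 and 0 < δ < 1 satisfy (1 + (1/(2√2) + √η)²)·δ² < 1. Then the quantities ρ = 2√2·δ·√η / (2√2·√(1 − δ²) − δ) and τ = 2√2·√(1 + δ) / (2√2·√(1 − δ²) − δ) are well-defined (the common denominator is positive, which holds whenever δ < √(8/9)) and satisfy 0 < ρ < 1 and τ > 0. -/
open Finset Matrix MeasureTheory

/-- well-definedness and bounds for the robust NSP constants ρ, τ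
produced from the restricted isometry constant δ. -/
theorem rho_tau_well_defined (η δ : ℝ) (hη : 2 ≤ η) (hδ0 : 0 < δ) (hδ1 : δ < 1)
    (h : (1 + (1 / (2 * Real.sqrt 2) + Real.sqrt η) ^ 2) * δ ^ 2 < 1) :
    (∀ δ' : ℝ, 0 ≤ δ' → δ' < Real.sqrt (8 / 9) →
        0 < 2 * Real.sqrt 2 * Real.sqrt (1 - δ' ^ 2) - δ') ∧
      0 < 2 * Real.sqrt 2 * Real.sqrt (1 - δ ^ 2) - δ ∧
      0 < 2 * Real.sqrt 2 * δ * Real.sqrt η /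
          (2 * Real.sqrt 2 * Real.sqrt (1 - δ ^ 2) - δ) ∧
      2 * Real.sqrt 2 * δ * Real.sqrt η /
          (2 * Real.sqrt 2 * Real.sqrt (1 - δ ^ 2) - δ) < 1 ∧
      0 < 2 * Real.sqrt 2 * Real.sqrt (1 + δ) /
          (2 * Real.sqrt 2 * Real.sqrt (1 - δ ^ 2) - δ) := by

  have ht0 : (0:ℝ) < Real.sqrt 2 := Real.sqrt_pos.mpr (by norm_num)
  have ht : Real.sqrt 2 ^ 2 = 2 := Real.sq_sqrt (by norm_num)
  set t := Real.sqrt 2 with htdef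
  -- Part 1
  have part1 : ∀ δ' : ℝ, 0 ≤ δ' → δ' < Real.sqrt (8 / 9) →
      0 < 2 * t * Real.sqrt (1 - δ' ^ 2) - δ' := by
    intro δ' hd0 hd1
    have hsq : δ' ^ 2 < 8 / 9 := by
      have := Real.sq_sqrt (show (0:ℝ) ≤ 8/9 by norm_num)
      nlinarith [Real.sqrt_nonneg (8/9:ℝ)]
    have ha0 : (0:ℝ) ≤ 1 - δ' ^ 2 := by nlinarith
    have ha : Real.sqrt (1 - δ' ^ 2) ^ 2 = 1 - δ' ^ 2 := Real.sq_sqrt ha0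
    have han : (0:ℝ) ≤ Real.sqrt (1 - δ' ^ 2) := Real.sqrt_nonneg _
    have key : δ' ^ 2 < (2 * t * Real.sqrt (1 - δ' ^ 2)) ^ 2 := by nlinarith
    have := lt_of_pow_lt_pow_left₀ 2 (by positivity) key
    linarith
  have hrw : 1 / (2 * t) = t / 4 := by
    rw [div_eq_div_iff (by positivity) (by norm_num)]
    nlinarith
  rw [hrw] at h
  have hδ89 : δ < Real.sqrt (8 / 9) := by
    have hse0 : (0:ℝ) ≤ Real.sqrt η := Real.sqrt_nonneg _
    have hse : Real.sqrt η ^ 2 = η := Real.sq_sqrt (by linarith)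
    have hse1 : 1 ≤ Real.sqrt η := by nlinarith
    have hδsq : δ ^ 2 < 8 / 9 := by nlinarith [sq_nonneg δ, mul_nonneg (mul_nonneg ht0.le hse0) (sq_nonneg δ)]
    have h89 : Real.sqrt (8/9) ^ 2 = 8/9 := Real.sq_sqrt (by norm_num)
    have hlt : δ ^ 2 < Real.sqrt (8/9) ^ 2 := by rw [h89]; exact hδsq
    exact lt_of_pow_lt_pow_left₀ 2 (Real.sqrt_nonneg (8/9:ℝ)) hlt
  have hD : 0 < 2 * t * Real.sqrt (1 - δ ^ 2) - δ := part1 δ hδ0.le hδ89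
  have hse0 : (0:ℝ) ≤ Real.sqrt η := Real.sqrt_nonneg _
  have hse : Real.sqrt η ^ 2 = η := Real.sq_sqrt (by linarith)
  have hse1 : 1 ≤ Real.sqrt η := by nlinarith
  have hρpos : 0 < 2 * t * δ * Real.sqrt η / (2 * t * Real.sqrt (1 - δ ^ 2) - δ) := by
    apply div_pos _ hD
    positivity
  have hρlt : 2 * t * δ * Real.sqrt η / (2 * t * Real.sqrt (1 - δ ^ 2) - δ) < 1 := by
    rw [div_lt_one hD]
    have ha0 : (0:ℝ) ≤ 1 - δ ^ 2 := by nlinarith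
    have ha : Real.sqrt (1 - δ ^ 2) ^ 2 = 1 - δ ^ 2 := Real.sq_sqrt ha0
    have key : (2 * t * δ * Real.sqrt η + δ) ^ 2 < (2 * t * Real.sqrt (1 - δ ^ 2)) ^ 2 := by
      nlinarith [sq_nonneg (Real.sqrt η * δ), sq_nonneg δ]
    have := lt_of_pow_lt_pow_left₀ 2 (by positivity) key
    linarith
  have hτpos : 0 < 2 * t * Real.sqrt (1 + δ) / (2 * t * Real.sqrt (1 - δ ^ 2) - δ) := by
    apply div_pos _ hD
    have : (0:ℝ) < Real.sqrt (1 + δ) := Real.sqrt_pos.mpr (by linarith)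
    positivity
  exact ⟨part1, hD, hρpos, hρlt, hτpos⟩
end
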